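/- Fix a distribution P over a countable measurable space X and a set A of probability distributions on X with P(P̂_n ∈ A) > 0. Then (1/n) · ln P(P̂_n ∈ A) = − D(ω_A ‖ P) − (1/n) · D(μ_A ‖ ω_A^n), where ω_A^n is the n-fold product distribution of ω_A on X^n. -/

import Mathlib

open scoped ENNReal

/-- Relative entropy (KL divergence) `D(Q ‖ R) = E_{y ∼ Q}[ln (Q y / R y)]`
for PMFs on a countable type. -/
noncomputable def klDiv {Y : Type*} (Q R : PMF Y) : ℝ :=
  ∑' y, (Q y).toReal * Real.log ((Q y).toReal / (R y).toReal)

/-- Cross entropy `H(Q, P) = E_{y ∼ Q}[ln (1 / P y)]`. -/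
noncomputable def crossEnt {Y : Type*} (Q P : PMF Y) : ℝ :=
  ∑' y, (Q y).toReal * Real.log (1 / (P y).toReal)

/-- Entropy `H(Q) = E_{y ∼ Q}[ln (1 / Q y)]`. -/
noncomputable def ent {Y : Type*} (Q : PMF Y) : ℝ :=
  ∑' y, (Q y).toReal * Real.log (1 / (Q y).toReal)

/-- The `n`-fold product distribution `P^n` on `X^n`, assigning to each
`y ∈ X^n` the probability `∏ i, P (y i)`. -/
noncomputable def piPMF {X : Type*} (n : ℕ) (P : PMF X) : PMF (Fin n → X) :=
  ⟨fun y => ∏ i, P (y i), by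
    rw [Summable.hasSum_iff ENNReal.summable]
    induction n with
    | zero =>
      rw [tsum_eq_single (default : Fin 0 → X)
        (fun b hb => absurd (Subsingleton.elim b default) hb)]
      simp
    | succ n ih =>
      rw [← (Fin.consEquiv (fun _ : Fin (n+1) => X)).tsum_eq, ENNReal.tsum_prod']
      simp only [Fin.consEquiv_apply, Fin.prod_univ_succ, Fin.cons_zero, Fin.cons_succ]
      simp_rw [ENNReal.tsum_mul_left, ih, mul_one]
      exact P.tsum_coe⟩

/-- The empirical measure `μ̂_Z` of a sample `Z ∈ X^n`: it assigns probability
`(1/n) · #{i : Z i = u}` to each point `u`, i.e. it is the pushforward of the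
uniform distribution on `Fin n` along `Z`. -/
noncomputable def empiricalPMF {X : Type*} (n : ℕ) [NeZero n] (Z : Fin n → X) : PMF X :=
  (PMF.uniformOfFintype (Fin n)).map Z

/-- `P(P̂_n ∈ A)`: the probability, under an i.i.d. sample `Z ∼ P^n`, that the
empirical measure `μ̂_Z` lies in the set `A` of distributions. -/
noncomputable def probIn {X : Type*} (n : ℕ) [NeZero n] (P : PMF X) (A : Set (PMF X)) : ℝ≥0∞ :=
  (piPMF n P).toOuterMeasure {Z | empiricalPMF n Z ∈ A}

/-- The convex combination `lam • Q₁ + (1 - lam) • Q₂` of two PMFs. -/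
noncomputable def mixPMF {Y : Type*} (lam : ℝ≥0∞) (hlam : lam ≤ 1) (Q₁ Q₂ : PMF Y) : PMF Y :=
  ⟨fun y => lam * Q₁ y + (1 - lam) * Q₂ y, by
    rw [Summable.hasSum_iff ENNReal.summable,
      ENNReal.tsum_add, ENNReal.tsum_mul_left,
      ENNReal.tsum_mul_left, Q₁.tsum_coe, Q₂.tsum_coe, mul_one, mul_one,
      add_tsub_cancel_of_le hlam]⟩

/-- A set of PMFs is convex if it is closed under convex combinations. -/
def IsConvexPMFSet {Y : Type*} (A : Set (PMF Y)) : Prop :=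
  ∀ Q₁ ∈ A, ∀ Q₂ ∈ A, ∀ (lam : ℝ≥0∞) (hlam : lam ≤ 1), mixPMF lam hlam Q₁ Q₂ ∈ A

section Helpers

lemma piPMF_apply {X : Type*} (n : ℕ) (P : PMF X) (y : Fin n → X) :
    piPMF n P y = ∏ i, P (y i) := rfl

lemma tsum_pi_prod {X : Type*} {ι : Type*} [Fintype ι] (P : PMF X) :
    ∑' y : ι → X, ∏ i, P (y i) = 1 := by
  classical
  let e := Fintype.equivFin ι
  let E := Equiv.arrowCongr e (Equiv.refl X)
  rw [← E.symm.tsum_eq]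
  have h : ∀ z : Fin (Fintype.card ι) → X, (∏ i, P (E.symm z i)) = ∏ j, P (z j) := by
    intro z
    have : ∀ i, E.symm z i = z (e i) := fun i => rfl
    simp_rw [this]
    exact e.prod_comp (fun j => P (z j))
  simp_rw [h]
  exact (piPMF _ P).tsum_coe

lemma piPMF_map_eval {X : Type*} (n : ℕ) (P : PMF X) (i : Fin n) :
    (piPMF n P).map (fun y => y i) = P := by
  classical
  ext u
  rw [PMF.map_apply]
  let e := Equiv.funSplitAt i X
  rw [← e.symm.tsum_eq, ENNReal.tsum_prod']
  have hys : ∀ (x : X) (r : {j : Fin n // j ≠ i} → X), e.symm (x, r) i = x := by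
    intro x r; simp [e]
  have hprod : ∀ (x : X) (r : {j : Fin n // j ≠ i} → X),
      piPMF n P (e.symm (x, r)) = P x * ∏ j : {j : Fin n // j ≠ i}, P (r j) := by
    intro x r
    rw [piPMF_apply, Finset.prod_eq_mul_prod_sdiff_singleton_of_mem (Finset.mem_univ i)]
    congr 1
    · rw [hys]
    · rw [Finset.prod_subtype (Finset.univ \ {i}) (p := fun j => j ≠ i) (by simp)]
      refine Finset.prod_congr rfl fun j _ => ?_
      congr 1
      simp [e, Equiv.funSplitAt, Equiv.piSplitAt, j.2]
  calc (∑' (x : X) (r : {j : Fin n // j ≠ i} → X),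
        if u = e.symm (x, r) i then piPMF n P (e.symm (x, r)) else 0)
      = ∑' (x : X), if u = x then P x else 0 := by
        refine tsum_congr fun x => ?_
        simp_rw [hys, hprod]
        by_cases hux : u = x
        · simp only [hux, if_true]
          rw [ENNReal.tsum_mul_left, tsum_pi_prod, mul_one]
        · simp [hux]
    _ = P u := by
        rw [tsum_eq_single u (fun b hb => by simp [Ne.symm hb])]
        simp

lemma pmf_map_mul_tsum {α β : Type*} (κ : PMF α) (k : α → β) (h : β → ℝ≥0∞) :
    ∑' a, κ a * h (k a) = ∑' b, κ.map k b * h b := by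
  classical
  have hthis : ∀ b, κ.map k b * h b = ∑' a, if b = k a then κ a * h (k a) else 0 := by
    intro b
    rw [PMF.map_apply, ← ENNReal.tsum_mul_right]
    refine tsum_congr fun a => ?_
    by_cases hb : b = k a
    · simp [hb]
    · simp [hb]
  simp_rw [hthis]
  rw [ENNReal.tsum_comm]
  refine tsum_congr fun a => ?_
  exact (tsum_ite_eq (k a) (fun _ => κ a * h (k a))).symm

lemma toReal_mul_nonneg {α : Type*} (κ : PMF α) (g : α → ℝ) (hg : ∀ a, 0 ≤ g a) (a : α) :
    (κ a).toReal * g a = (κ a * ENNReal.ofReal (g a)).toReal := by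
  rw [ENNReal.toReal_mul, ENNReal.toReal_ofReal (hg a)]

lemma summable_toReal_mul {α : Type*} (κ : PMF α) (g : α → ℝ) (hg : ∀ a, 0 ≤ g a)
    (hfin : ∑' a, κ a * ENNReal.ofReal (g a) ≠ ⊤) :
    Summable (fun a => (κ a).toReal * g a) := by
  simp_rw [toReal_mul_nonneg κ g hg]
  exact ENNReal.summable_toReal hfin

lemma tsum_toReal_mul {α : Type*} (κ : PMF α) (g : α → ℝ) (hg : ∀ a, 0 ≤ g a) :
    ∑' a, (κ a).toReal * g a = (∑' a, κ a * ENNReal.ofReal (g a)).toReal := by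
  simp_rw [toReal_mul_nonneg κ g hg]
  exact (ENNReal.tsum_toReal_eq fun a =>
    ENNReal.mul_ne_top (κ.apply_ne_top a) ENNReal.ofReal_ne_top).symm

lemma signed_summable_mul {α : Type*} (κ : PMF α) (g : α → ℝ)
    (hp : ∑' a, κ a * ENNReal.ofReal (max (g a) 0) ≠ ⊤)
    (hm : ∑' a, κ a * ENNReal.ofReal (max (-g a) 0) ≠ ⊤) :
    Summable (fun a => (κ a).toReal * g a) := by
  have h1 := summable_toReal_mul κ _ (fun a => le_max_right _ _) hp
  have h2 := summable_toReal_mul κ _ (fun a => le_max_right _ _) hm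
  refine (h1.sub h2).congr fun a => ?_
  rw [← mul_sub, max_zero_sub_max_neg_zero_eq_self]

lemma signed_tsum_mul {α : Type*} (κ : PMF α) (g : α → ℝ)
    (hp : ∑' a, κ a * ENNReal.ofReal (max (g a) 0) ≠ ⊤)
    (hm : ∑' a, κ a * ENNReal.ofReal (max (-g a) 0) ≠ ⊤) :
    ∑' a, (κ a).toReal * g a
      = (∑' a, κ a * ENNReal.ofReal (max (g a) 0)).toReal
        - (∑' a, κ a * ENNReal.ofReal (max (-g a) 0)).toReal := by
  have h1 := summable_toReal_mul κ _ (fun a => le_max_right _ _) hp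
  have h2 := summable_toReal_mul κ _ (fun a => le_max_right _ _) hm
  have hsplit : ∀ a, (κ a).toReal * g a =
      (κ a).toReal * max (g a) 0 - (κ a).toReal * max (-g a) 0 := by
    intro a; rw [← mul_sub, max_zero_sub_max_neg_zero_eq_self]
  rw [tsum_congr hsplit, Summable.tsum_sub h1 h2,
    tsum_toReal_mul κ _ (fun a => le_max_right _ _),
    tsum_toReal_mul κ _ (fun a => le_max_right _ _)]

lemma pmf_tsum_toReal_eq_one {α : Type*} (κ : PMF α) : ∑' a, (κ a).toReal = 1 := by
  rw [← ENNReal.tsum_toReal_eq κ.apply_ne_top, κ.tsum_coe, ENNReal.toReal_one]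

lemma pmf_summable_toReal {α : Type*} (κ : PMF α) : Summable (fun a => (κ a).toReal) :=
  ENNReal.summable_toReal (by rw [κ.tsum_coe]; exact ENNReal.one_ne_top)

end Helpers

/-- Exact identity (Theorem 3, Eq. (3) of the paper):
`(1/n) ln P(P̂_n ∈ A) = - D(ω_A ‖ P) - (1/n) D(μ_A ‖ ω_A^n)`. -/
theorem sanov_exact_identity {X : Type*} [Countable X] [MeasurableSpace X] [MeasurableSingletonClass X]
    (n : ℕ) [NeZero n] (P : PMF X) (A : Set (PMF X))
    (hA : 0 < probIn n P A)
    (μA : PMF (Fin n → X))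
    (hμA : ∀ y : Fin n → X,
      μA y = (piPMF n P).toOuterMeasure ({y} ∩ {Z | empiricalPMF n Z ∈ A}) / probIn n P A)
    (ωA : PMF X)
    (hωA : ∀ i : Fin n, ωA = μA.map (fun Z => Z i)) :
    (1 / (n : ℝ)) * Real.log (probIn n P A).toReal =
      - klDiv ωA P - (1 / (n : ℝ)) * klDiv μA (piPMF n ωA) := by
  classical
  set E : Set (Fin n → X) := {Z | empiricalPMF n Z ∈ A} with hE
  set pE : ℝ≥0∞ := probIn n P A with hpdef
  have hp0 : pE ≠ 0 := hA.ne'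
  have hple : pE ≤ 1 := by
    rw [hpdef, probIn, PMF.toOuterMeasure_apply]
    calc (∑' x, Set.indicator E (⇑(piPMF n P)) x) ≤ ∑' x, piPMF n P x :=
          Summable.tsum_le_tsum (fun x => Set.indicator_le_self _ _ x) ENNReal.summable ENNReal.summable
      _ = 1 := (piPMF n P).tsum_coe
  have hpt : pE ≠ ⊤ := ne_top_of_le_ne_top ENNReal.one_ne_top hple
  set p : ℝ := pE.toReal with hpR
  have hp : 0 < p := ENNReal.toReal_pos hp0 hpt
  have hp1 : p ≤ 1 := by
    have := ENNReal.toReal_mono ENNReal.one_ne_top hple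
    simpa using this
  -- description of μA
  have hμ : ∀ y, μA y = if y ∈ E then piPMF n P y / pE else 0 := by
    intro y
    rw [hμA y]
    by_cases hy : y ∈ E
    · rw [Set.inter_eq_self_of_subset_left (Set.singleton_subset_iff.mpr hy),
        PMF.toOuterMeasure_apply_singleton, if_pos hy]
    · rw [Set.singleton_inter_eq_empty.mpr hy, if_neg hy]
      simp
  -- marginal bound
  have i0 : Fin n := ⟨0, Nat.pos_of_ne_zero (NeZero.ne n)⟩
  have hω_le : ∀ u, ωA u ≤ P u / pE := by
    intro u
    have hmarg : (∑' y : Fin n → X, if u = y i0 then piPMF n P y else 0) = P u := by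
      have h := congrArg (fun q : PMF X => q u) (piPMF_map_eval n P i0)
      simp only [PMF.map_apply] at h
      exact h
    rw [hωA i0, PMF.map_apply]
    calc (∑' y : Fin n → X, if u = y i0 then μA y else 0)
        ≤ ∑' y : Fin n → X, (if u = y i0 then piPMF n P y else 0) / pE := by
          refine Summable.tsum_le_tsum (fun y => ?_) ENNReal.summable ENNReal.summable
          by_cases hy : u = y i0
          · rw [if_pos hy, if_pos hy, hμ y]
            split_ifs with h
            · exact le_refl _
            · exact zero_le
          · simp [hy]
      _ = (∑' y : Fin n → X, if u = y i0 then piPMF n P y else 0) / pE := by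
          simp_rw [div_eq_mul_inv, ENNReal.tsum_mul_right]
      _ = P u / pE := by rw [hmarg]
  have hωR : ∀ u, (ωA u).toReal ≤ (P u).toReal / p := by
    intro u
    have h2 : P u / pE ≠ ⊤ := (ENNReal.div_lt_top (P.apply_ne_top u) hp0).ne
    calc (ωA u).toReal ≤ (P u / pE).toReal := ENNReal.toReal_mono h2 (hω_le u)
      _ = (P u).toReal / p := ENNReal.toReal_div _ _
  have hPne : ∀ u, ωA u ≠ 0 → P u ≠ 0 := by
    intro u hω hP
    apply hω
    have h := hω_le u
    rw [hP, ENNReal.zero_div] at h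
    exact le_antisymm h zero_le
  set c : X → ℝ := fun u => Real.log ((P u).toReal / (ωA u).toReal) with hc
  -- finiteness of omega-side sums
  have hEcp : ∑' u, ωA u * ENNReal.ofReal (max (c u) 0) ≠ ⊤ := by
    have hb : ∀ u, ωA u * ENNReal.ofReal (max (c u) 0) ≤ P u := by
      intro u
      by_cases hω : ωA u = 0
      · simp [hω]
      have hP : P u ≠ 0 := hPne u hω
      have hωpos : 0 < (ωA u).toReal := ENNReal.toReal_pos hω (ωA.apply_ne_top u)
      have hPpos : 0 < (P u).toReal := ENNReal.toReal_pos hP (P.apply_ne_top u)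
      have key : (ωA u).toReal * max (c u) 0 ≤ (P u).toReal := by
        rcases le_or_gt (c u) 0 with h | h
        · rw [max_eq_right h, mul_zero]; exact hPpos.le
        · rw [max_eq_left h.le]
          have hlog : c u ≤ (P u).toReal / (ωA u).toReal - 1 :=
            Real.log_le_sub_one_of_pos (by positivity)
          calc (ωA u).toReal * c u
              ≤ (ωA u).toReal * ((P u).toReal / (ωA u).toReal - 1) :=
                mul_le_mul_of_nonneg_left hlog hωpos.le
            _ = (P u).toReal - (ωA u).toReal := by field_simp
            _ ≤ (P u).toReal := by linarith
      calc ωA u * ENNReal.ofReal (max (c u) 0)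
          = ENNReal.ofReal ((ωA u).toReal * max (c u) 0) := by
            rw [ENNReal.ofReal_mul ENNReal.toReal_nonneg,
              ENNReal.ofReal_toReal (ωA.apply_ne_top u)]
        _ ≤ ENNReal.ofReal (P u).toReal := ENNReal.ofReal_le_ofReal key
        _ = P u := ENNReal.ofReal_toReal (P.apply_ne_top u)
    refine ne_top_of_le_ne_top ENNReal.one_ne_top ?_
    calc ∑' u, ωA u * ENNReal.ofReal (max (c u) 0)
        ≤ ∑' u, P u := Summable.tsum_le_tsum hb ENNReal.summable ENNReal.summable
      _ = 1 := P.tsum_coe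
  have hEcm : ∑' u, ωA u * ENNReal.ofReal (max (-c u) 0) ≠ ⊤ := by
    have hlp : 0 ≤ Real.log p⁻¹ := Real.log_nonneg (one_le_inv_iff₀.mpr ⟨hp, hp1⟩)
    have hb : ∀ u, ωA u * ENNReal.ofReal (max (-c u) 0)
        ≤ ωA u * ENNReal.ofReal (Real.log p⁻¹) := by
      intro u
      refine mul_le_mul_right (ENNReal.ofReal_le_ofReal (max_le ?_ hlp)) _
      by_cases hω : ωA u = 0
      · have : c u = 0 := by simp [hc, hω]
        rw [this, neg_zero]; exact hlp
      have hP : P u ≠ 0 := hPne u hω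
      have hωpos : 0 < (ωA u).toReal := ENNReal.toReal_pos hω (ωA.apply_ne_top u)
      have hPpos : 0 < (P u).toReal := ENNReal.toReal_pos hP (P.apply_ne_top u)
      have h1 : -c u = Real.log (ωA u).toReal - Real.log (P u).toReal := by
        rw [hc]
        dsimp only
        rw [Real.log_div hPpos.ne' hωpos.ne']
        ring
      have h2 : Real.log (ωA u).toReal ≤ Real.log ((P u).toReal / p) :=
        Real.log_le_log hωpos (hωR u)
      have h3 : Real.log ((P u).toReal / p) = Real.log (P u).toReal - Real.log p :=
        Real.log_div hPpos.ne' hp.ne'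
      rw [h1, Real.log_inv]
      linarith
    have hle2 : ∑' u, ωA u * ENNReal.ofReal (max (-c u) 0)
        ≤ ENNReal.ofReal (Real.log p⁻¹) := by
      calc ∑' u, ωA u * ENNReal.ofReal (max (-c u) 0)
          ≤ ∑' u, ωA u * ENNReal.ofReal (Real.log p⁻¹) :=
            Summable.tsum_le_tsum hb ENNReal.summable ENNReal.summable
        _ = ENNReal.ofReal (Real.log p⁻¹) := by
            rw [ENNReal.tsum_mul_right, ωA.tsum_coe, one_mul]
    exact (lt_of_le_of_lt hle2 ENNReal.ofReal_lt_top).ne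
  -- transfer to mu-side
  have htrans : ∀ (i : Fin n) (h : X → ℝ≥0∞),
      ∑' y, μA y * h (y i) = ∑' u, ωA u * h u := by
    intro i h
    rw [pmf_map_mul_tsum μA (fun y => y i) h, ← hωA i]
  set W : ℝ := (∑' u, ωA u * ENNReal.ofReal (max (c u) 0)).toReal
    - (∑' u, ωA u * ENNReal.ofReal (max (-c u) 0)).toReal with hWdef
  have hSi : ∀ i : Fin n, Summable (fun y => (μA y).toReal * c (y i)) := by
    intro i
    refine signed_summable_mul μA (fun y => c (y i)) ?_ ?_
    · rw [htrans i (fun u => ENNReal.ofReal (max (c u) 0))]; exact hEcp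
    · rw [htrans i (fun u => ENNReal.ofReal (max (-c u) 0))]; exact hEcm
  have hVi : ∀ i : Fin n, ∑' y, (μA y).toReal * c (y i) = W := by
    intro i
    rw [signed_tsum_mul μA (fun y => c (y i))
      (by rw [htrans i (fun u => ENNReal.ofReal (max (c u) 0))]; exact hEcp)
      (by rw [htrans i (fun u => ENNReal.ofReal (max (-c u) 0))]; exact hEcm),
      htrans i (fun u => ENNReal.ofReal (max (c u) 0)),
      htrans i (fun u => ENNReal.ofReal (max (-c u) 0))]
  have hW : ∑' u, (ωA u).toReal * c u = W := by
    rw [signed_tsum_mul ωA c hEcp hEcm]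
  -- klDiv omega P
  have hKω : klDiv ωA P = - W := by
    rw [← hW, ← tsum_neg]
    simp only [klDiv]
    refine tsum_congr fun u => ?_
    by_cases hω : ωA u = 0
    · simp [hω]
    have hP : P u ≠ 0 := hPne u hω
    have hωpos : 0 < (ωA u).toReal := ENNReal.toReal_pos hω (ωA.apply_ne_top u)
    have hPpos : 0 < (P u).toReal := ENNReal.toReal_pos hP (P.apply_ne_top u)
    rw [hc]
    dsimp only
    rw [Real.log_div hωpos.ne' hPpos.ne', Real.log_div hPpos.ne' hωpos.ne']
    ring
  -- klDiv mu (piPMF n omega)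
  have hterm : ∀ y, (μA y).toReal * Real.log ((μA y).toReal / ((piPMF n ωA) y).toReal)
      = (∑ i, (μA y).toReal * c (y i)) - Real.log p * (μA y).toReal := by
    intro y
    by_cases h0 : μA y = 0
    · simp [h0]
    have hyE : y ∈ E := by
      by_contra hy
      rw [hμ y, if_neg hy] at h0
      exact h0 rfl
    have hval : μA y = piPMF n P y / pE := by rw [hμ y, if_pos hyE]
    have hprod0 : piPMF n P y ≠ 0 := by
      intro hz
      rw [hval, hz, ENNReal.zero_div] at h0
      exact h0 rfl
    have hPi : ∀ i, P (y i) ≠ 0 := by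
      intro i hzero
      rw [piPMF_apply] at hprod0
      exact hprod0 (Finset.prod_eq_zero (Finset.mem_univ i) hzero)
    have hωi : ∀ i, ωA (y i) ≠ 0 := by
      intro i
      have hle : μA y ≤ ωA (y i) := by
        rw [hωA i, PMF.map_apply]
        refine le_trans ?_ (ENNReal.le_tsum y)
        simp
      intro hzero
      rw [hzero, le_zero_iff] at hle
      exact h0 hle
    have hμt : (μA y).toReal = (∏ i, (P (y i)).toReal) / p := by
      rw [hval, ENNReal.toReal_div, piPMF_apply, ENNReal.toReal_prod]
    have hΩt : ((piPMF n ωA) y).toReal = ∏ i, (ωA (y i)).toReal := by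
      rw [piPMF_apply, ENNReal.toReal_prod]
    have hPt0 : ∀ i, (P (y i)).toReal ≠ 0 := fun i =>
      (ENNReal.toReal_pos (hPi i) (P.apply_ne_top _)).ne'
    have hωt0 : ∀ i, (ωA (y i)).toReal ≠ 0 := fun i =>
      (ENNReal.toReal_pos (hωi i) (ωA.apply_ne_top _)).ne'
    have hnum0 : (∏ i, (P (y i)).toReal) ≠ 0 :=
      Finset.prod_ne_zero_iff.mpr fun i _ => hPt0 i
    have hden0 : (∏ i, (ωA (y i)).toReal) ≠ 0 :=
      Finset.prod_ne_zero_iff.mpr fun i _ => hωt0 i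
    have hci : ∀ i, c (y i) = Real.log (P (y i)).toReal - Real.log (ωA (y i)).toReal := by
      intro i
      rw [hc]
      dsimp only
      rw [Real.log_div (hPt0 i) (hωt0 i)]
    have hlog : Real.log ((μA y).toReal / ((piPMF n ωA) y).toReal)
        = (∑ i, c (y i)) - Real.log p := by
      rw [hμt, hΩt, Real.log_div (div_ne_zero hnum0 hp.ne') hden0,
        Real.log_div hnum0 hp.ne',
        Real.log_prod (fun i _ => hPt0 i), Real.log_prod (fun i _ => hωt0 i),
        Finset.sum_congr rfl (fun i _ => hci i), Finset.sum_sub_distrib]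
      ring
    rw [hlog, mul_sub, Finset.mul_sum, mul_comm ((μA y).toReal) (Real.log p)]
  have hKμ : klDiv μA (piPMF n ωA) = n * W - Real.log p := by
    simp only [klDiv]
    rw [tsum_congr hterm]
    have hs1 : Summable (fun y => ∑ i, (μA y).toReal * c (y i)) :=
      summable_sum (fun i _ => hSi i)
    have hs2 : Summable (fun y => Real.log p * (μA y).toReal) :=
      (pmf_summable_toReal μA).mul_left _
    rw [Summable.tsum_sub hs1 hs2, Summable.tsum_finsetSum (fun i _ => hSi i), tsum_mul_left,
      pmf_tsum_toReal_eq_one μA, mul_one,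
      Finset.sum_congr rfl (fun i _ => hVi i), Finset.sum_const, Finset.card_univ,
      Fintype.card_fin, nsmul_eq_mul]
  rw [hKμ, hKω]
  have hn : (n : ℝ) ≠ 0 := Nat.cast_ne_zero.mpr (NeZero.ne n)
  field_simp
  ring
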